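/- Let A be a Noetherian algebra over a field K of characteristic 0 and D : A → A a derivation. Then every minimal prime ideal of A is stable under D, i.e., D(p) ⊆ p for every minimal prime p of A. -/

import Mathlib

/-- **Lemma 2.1.4.**  Minimal prime ideals of a Noetherian algebra over a field of
characteristic zero are stable under any derivation. -/
theorem minimalPrime_stable_under_derivation
    {K A : Type*} [Field K] [CharZero K] [CommRing A] [Algebra K A]
    [IsNoetherianRing A]
    (D : Derivation K A A) (p : Ideal A) (hp : p ∈ minimalPrimes A) :
    ∀ x ∈ p, D x ∈ p := by
  intro x hx
  have hp' : p.IsPrime := hp.1.1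
  -- x is nilpotent in the localization at p
  have hnil : IsNilpotent (algebraMap A (Localization p.primeCompl) x) := by
    haveI := Ring.KrullDimLE.of_isLocalization p hp (Localization p.primeCompl)
    rw [Ring.KrullDimLE.isNilpotent_iff_mem_maximalIdeal]
    exact (IsLocalization.AtPrime.to_map_mem_maximal_iff _ p x).mpr hx
  obtain ⟨n₀, hn₀⟩ := hnil
  rw [← map_pow, IsLocalization.map_eq_zero_iff p.primeCompl] at hn₀
  obtain ⟨s₀, hs₀⟩ := hn₀
  -- minimal n with some s ∉ p, s * x ^ n = 0
  have hP : ∃ n : ℕ, ∃ s : A, s ∉ p ∧ s * x ^ n = 0 := ⟨n₀, s₀, s₀.2, hs₀⟩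
  classical
  set n := Nat.find hP with hn
  obtain ⟨s, hs, hsx⟩ := Nat.find_spec hP
  rw [← hn] at hsx
  have hn0 : n ≠ 0 := by
    intro h
    rw [h, pow_zero, mul_one] at hsx
    exact hs (hsx ▸ p.zero_mem)
  by_contra hDx
  -- apply the derivation to s * x ^ n = 0
  have h1 : s * D (x ^ n) + x ^ n * D s = 0 := by
    have := congrArg D hsx
    rw [D.leibniz, map_zero] at this
    simpa [smul_eq_mul] using this
  have h2 : D (x ^ n) = n • (x ^ (n - 1) * D x) := by
    rw [D.leibniz_pow]; simp [smul_eq_mul]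
  -- multiply by s to kill the second term
  have h3 : n • (s * s * x ^ (n - 1) * D x) = 0 := by
    have := congrArg (s * ·) h1
    simp only [mul_add, mul_zero] at this
    rw [h2] at this
    have hzero : s * (x ^ n * D s) = 0 := by
      rw [show s * (x ^ n * D s) = s * x ^ n * D s by ring, hsx, zero_mul]
    rw [hzero, add_zero] at this
    rw [← this, mul_smul_comm]
    ring_nf
  -- cancel n using char 0
  have hAnt : Nontrivial A := ⟨⟨0, 1, fun h => hp'.ne_top (by
    rw [Ideal.eq_top_iff_one, ← h]; exact p.zero_mem)⟩⟩
  have h4 : s * s * x ^ (n - 1) * D x = 0 := by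
    have hnK : (n : K) ≠ 0 := Nat.cast_ne_zero.mpr hn0
    have := congrArg (fun y => (n : K)⁻¹ • y) h3
    simpa [← Nat.cast_smul_eq_nsmul K, smul_smul, inv_mul_cancel₀ hnK] using this
  -- contradiction with minimality of n
  have hq : s * s * D x ∉ p := fun h => by
    rcases hp'.mem_or_mem h with h' | h'
    · exact (hp'.mem_or_mem h').elim hs hs
    · exact hDx h'
  have : ∃ s' : A, s' ∉ p ∧ s' * x ^ (n - 1) = 0 :=
    ⟨s * s * D x, hq, by rw [← h4]; ring⟩
  exact Nat.find_min hP (Nat.sub_lt (Nat.pos_of_ne_zero hn0) one_pos) this
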